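/- arXiv:2101.05032 — 3 statements merged into one kernel-verified Lean document; each statement's English description precedes it below -/
import Mathlib

section
/- For all real x ≥ 2, the unique y > 1 satisfying y * log₂ y = x (the inverse of W(y) = y log₂ y on (1,∞)) satisfies x / log₂ x ≤ y ≤ 2x / log₂ x. -/
theorem stmt_0 (x y : ℝ) (hx : 2 ≤ x) (hy : 1 < y)
    (hW : y * Real.logb 2 y = x) :
    x / Real.logb 2 x ≤ y ∧ y ≤ 2 * x / Real.logb 2 x := by
  have hy0 : (0:ℝ) < y := by linarith
  have hLy : 0 < Real.logb 2 y := Real.logb_pos one_lt_two hy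
  have hLx1 : 1 ≤ Real.logb 2 x := by
    have := Real.logb_le_logb_of_le one_lt_two (by norm_num) hx
    simpa using this
  have hLx : 0 < Real.logb 2 x := by linarith
  -- y ≤ x
  have hyx : y ≤ x := by
    by_contra h
    push_neg at h
    have h1 : Real.logb 2 x < Real.logb 2 y :=
      Real.logb_lt_logb one_lt_two (by linarith) h
    nlinarith
  have hLyLx : Real.logb 2 y ≤ Real.logb 2 x :=
    Real.logb_le_logb_of_le one_lt_two (by positivity) hyx
  constructor
  · rw [div_le_iff₀ hLx]
    nlinarith
  · -- logb 2 y ≤ y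
    have hby : 1 + y ≤ (2:ℝ) ^ y := by
      have := one_add_mul_self_le_rpow_one_add (s := 1) (by norm_num) (p := y) hy.le
      norm_num at this
      simpa [mul_comm] using this
    have hylt : y ≤ (2:ℝ) ^ y := by linarith
    have hlogy : Real.logb 2 y ≤ y := by
      calc Real.logb 2 y ≤ Real.logb 2 ((2:ℝ) ^ y) :=
            Real.logb_le_logb_of_le one_lt_two (by positivity) hylt
        _ = y := Real.logb_rpow (by norm_num) (by norm_num)
    have hxy2 : x ≤ y ^ 2 := by nlinarith
    have hLx2 : Real.logb 2 x ≤ 2 * Real.logb 2 y := by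
      calc Real.logb 2 x ≤ Real.logb 2 (y ^ 2) := Real.logb_le_logb_of_le one_lt_two (by positivity) hxy2
        _ = 2 * Real.logb 2 y := by
            rw [Real.logb_pow]; push_cast; ring
    rw [le_div_iff₀ hLx]
    nlinarith
end

section
/- For all real ε with 0 < ε < 1 and r = (2(1+ε) + √(2ε² + 4ε + 4))/ε, we have 1/log₂(r/(r−1)) < 5/ε. -/
theorem stmt_11 (ε r : ℝ) (hε0 : 0 < ε) (hε1 : ε < 1)
    (hr : r = (2 * (1 + ε) + Real.sqrt (2 * ε ^ 2 + 4 * ε + 4)) / ε) :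
    1 / Real.logb 2 (r / (r - 1)) < 5 / ε := by
  set s := Real.sqrt (2 * ε ^ 2 + 4 * ε + 4) with hs
  have hs0 : 0 ≤ s := Real.sqrt_nonneg _
  have hsq : s ^ 2 = 2 * ε ^ 2 + 4 * ε + 4 := Real.sq_sqrt (by positivity)
  have hs2 : 2 ≤ s := by nlinarith
  have hslt : s < 3.163 := by
    rw [hs]
    rw [show (3.163:ℝ) = Real.sqrt (3.163^2) by rw [Real.sqrt_sq (by norm_num)]]
    apply Real.sqrt_lt_sqrt (by nlinarith)
    nlinarith
  have hrpos : 0 < r := by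
    rw [hr]; positivity
  have hr1 : 1 < r := by
    rw [hr, lt_div_iff₀ hε0]; nlinarith
  have hrm1 : 0 < r - 1 := by linarith
  have hratio : 1 < r / (r - 1) := by
    rw [lt_div_iff₀ hrm1]; linarith
  have hL : 0 < Real.log (r / (r - 1)) := Real.log_pos hratio
  have hlog2 : 0 < Real.log 2 := Real.log_pos (by norm_num)
  -- key lower bound: log (r/(r-1)) ≥ 1/r
  have h1 : 1 / r ≤ Real.log (r / (r - 1)) := by
    have he : (r - 1) / r ≤ Real.exp (-(1 / r)) := by
      have := Real.add_one_le_exp (-(1 / r))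
      have : 1 - 1 / r ≤ Real.exp (-(1 / r)) := by linarith
      calc (r - 1) / r = 1 - 1 / r := by field_simp
        _ ≤ _ := this
    have hlg : Real.log ((r - 1) / r) ≤ -(1 / r) := by
      rw [Real.log_le_iff_le_exp (by positivity)]; exact he
    have : Real.log ((r - 1) / r) = - Real.log (r / (r - 1)) := by
      rw [← Real.log_inv]; congr 1; field_simp
    linarith [this ▸ hlg]
  -- numeric bound: ε * log 2 < 5 / r, i.e. r * ε * log 2 < 5
  have hnum : ε * Real.log 2 < 5 * (1 / r) := by
    have hre : r * ε = 2 * (1 + ε) + s := by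
      rw [hr]; field_simp
    have hl2 : Real.log 2 < 0.6931471808 := Real.log_two_lt_d9
    rw [show (5:ℝ) * (1 / r) = 5 / r by ring, lt_div_iff₀ hrpos]
    calc ε * Real.log 2 * r = (r * ε) * Real.log 2 := by ring
      _ = (2 * (1 + ε) + s) * Real.log 2 := by rw [hre]
      _ < 5 := by nlinarith
  have h5L : ε * Real.log 2 < 5 * Real.log (r / (r - 1)) := by
    calc ε * Real.log 2 < 5 * (1 / r) := hnum
      _ ≤ 5 * Real.log (r / (r - 1)) := by linarith
  have hlogb : Real.logb 2 (r / (r - 1)) = Real.log (r / (r - 1)) / Real.log 2 := rfl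
  rw [hlogb, one_div_div, div_lt_div_iff₀ hL hε0]
  linarith
end

section
/- If R is a natural number with R ≥ 1 and R^R ≤ m for a real m ≥ 2, then R ≤ 2·log₂ m / log₂ log₂ m whenever log₂ log₂ m ≥ 1 (i.e., m ≥ 4). -/
-- helper: ln y ≤ y / e for y > 0
private lemma log_le_div_e {y : ℝ} (hy : 0 < y) : Real.log y ≤ y / Real.exp 1 := by
  have he : (0:ℝ) < Real.exp 1 := Real.exp_pos 1
  have h := Real.log_le_sub_one_of_pos (show 0 < y / Real.exp 1 by positivity)
  rw [Real.log_div (ne_of_gt hy) (ne_of_gt he), Real.log_exp] at h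
  linarith

-- helper: log₂ y ≤ y for y ≥ 1
private lemma logb_two_le_self {y : ℝ} (hy : 1 ≤ y) : Real.logb 2 y ≤ y := by
  have hy0 : 0 < y := by linarith
  have h1 : Real.log y ≤ y / Real.exp 1 := log_le_div_e hy0
  have he : (2.7182818283:ℝ) < Real.exp 1 := Real.exp_one_gt_d9
  have hl2 : (0.6931471803:ℝ) < Real.log 2 := Real.log_two_gt_d9
  have h2 : y / Real.exp 1 ≤ y / 2 := by
    apply div_le_div_of_nonneg_left (by linarith) (by norm_num) (by linarith)
  have : Real.log y ≤ y * Real.log 2 := by nlinarith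
  rw [Real.logb, div_le_iff₀ (by linarith : (0:ℝ) < Real.log 2)]
  linarith

theorem stmt_19 (R : ℕ) (hR : 1 ≤ R) (m : ℝ) (hm : 2 ≤ m)
    (hRm : (R : ℝ) ^ R ≤ m) (hll : 1 ≤ Real.logb 2 (Real.logb 2 m)) :
    (R : ℝ) ≤ 2 * Real.logb 2 m / Real.logb 2 (Real.logb 2 m) := by
  set x := Real.logb 2 m with hx
  set L := Real.logb 2 x with hL
  have h2 : (1:ℝ) < 2 := one_lt_two
  -- x ≥ 1
  have hx1 : 1 ≤ x := by
    calc (1:ℝ) = Real.logb 2 2 := (Real.logb_self_eq_one h2).symm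
    _ ≤ x := Real.logb_le_logb_of_le h2 (by norm_num) hm
  have hx0 : 0 < x := by linarith
  -- x ≥ 2
  have hx2 : 2 ≤ x := by
    have : (2:ℝ) = 2 ^ (1:ℝ) := by norm_num
    rw [this, ← Real.rpow_logb (by norm_num : (0:ℝ) < 2) (by norm_num) hx0]
    exact Real.rpow_le_rpow_left_iff h2 |>.mpr hll
  have hL1 : 1 ≤ L := hll
  have hL0 : 0 < L := by linarith
  -- sqrt facts
  have hs0 : 0 < Real.sqrt x := Real.sqrt_pos.mpr hx0
  have hs1 : 1 ≤ Real.sqrt x := by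
    rw [show (1:ℝ) = Real.sqrt 1 by simp]; exact Real.sqrt_le_sqrt hx1
  have hsq : Real.sqrt x * Real.sqrt x = x := Real.mul_self_sqrt (le_of_lt hx0)
  -- L ≤ 2 √x
  have hL2s : L ≤ 2 * Real.sqrt x := by
    have : L = 2 * Real.logb 2 (Real.sqrt x) := by
      rw [hL]; nth_rewrite 1 [← hsq]
      rw [Real.logb_mul (ne_of_gt hs0) (ne_of_gt hs0)]; ring
    rw [this]
    have := logb_two_le_self hs1
    linarith
  -- B := 2x/L ≥ √x
  have hB : Real.sqrt x ≤ 2 * x / L := by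
    rw [le_div_iff₀ hL0]
    nlinarith
  by_contra hcon
  push_neg at hcon
  -- R·log₂R ≤ x
  have hRx : (R:ℝ) * Real.logb 2 (R:ℝ) ≤ x := by
    have h1 : Real.logb 2 ((R:ℝ) ^ R) ≤ x := Real.logb_le_logb_of_le h2 (by positivity) hRm
    rwa [Real.logb_pow] at h1
  -- log₂ R ≥ L/2
  have hRs : Real.sqrt x < (R:ℝ) := lt_of_le_of_lt hB hcon
  have hlogR : L / 2 ≤ Real.logb 2 (R:ℝ) := by
    have h1 : Real.logb 2 (Real.sqrt x) ≤ Real.logb 2 (R:ℝ) :=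
      Real.logb_le_logb_of_le h2 hs0 (le_of_lt hRs)
    have h2' : Real.logb 2 (Real.sqrt x) = L / 2 := by
      rw [hL]; nth_rewrite 2 [← hsq]
      rw [Real.logb_mul (ne_of_gt hs0) (ne_of_gt hs0)]; ring
    linarith
  -- contradiction
  have hB0 : 0 < 2 * x / L := by positivity
  have : x < (R:ℝ) * Real.logb 2 (R:ℝ) := by
    have h1 : (2 * x / L) * (L / 2) ≤ (2 * x / L) * Real.logb 2 (R:ℝ) := by
      apply mul_le_mul_of_nonneg_left hlogR (le_of_lt hB0)
    have h2' : (2 * x / L) * (L / 2) = x := by field_simp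
    have h3 : 0 < Real.logb 2 (R:ℝ) := by linarith
    nlinarith
  linarith
end
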